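/- Let λ₁ > 0 and integer m ≥ 1 satisfy 1 = (1/(2m)) ∫_{-1}^1 (-φ'(z̄))/(1 + λ₁ - z̄) dz̄, let b₀(z) = 1/(1 + λ₁ - z), and let G ∈ L²([-1,1]). Define λ := (∫_{-1}^1 G b₀ φ' dz̄) / (∫_{-1}^1 b₀² φ' dz̄) (the denominator is nonzero since φ' < 0 a.e. and b₀ > 0). Then f(z) := (G(z) - λ b₀(z)) b₀(z) solves (1 + λ₁ - z) f(z) + (1/(2m)) ∫_{-1}^1 φ'(z̄) f(z̄) dz̄ + λ b₀(z) = G(z). -/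

import Mathlib

open Real MeasureTheory

theorem solvability_with_rank_one_correction (lam₁ : ℝ) (hlam : 0 < lam₁)
    (m : ℕ) (hm : 1 ≤ m)
    (φ' : ℝ → ℝ) (hφmeas : Measurable φ') (Cφ : ℝ) (hφb : ∀ z, |φ' z| ≤ Cφ)
    (hφneg : ∀ᵐ z ∂(MeasureTheory.volume.restrict (Set.Ioo (-1:ℝ) 1)), φ' z < 0)
    (heq : 1 = (1 / (2 * m)) * ∫ z in (-1:ℝ)..1, (-φ' z) / (1 + lam₁ - z))
    (G : ℝ → ℝ) (hG : MemLp G 2 (MeasureTheory.volume.restrict (Set.Icc (-1:ℝ) 1))) :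
    let b₀ : ℝ → ℝ := fun z => 1 / (1 + lam₁ - z)
    let lam : ℝ := (∫ z in (-1:ℝ)..1, G z * b₀ z * φ' z)
        / (∫ z in (-1:ℝ)..1, (b₀ z) ^ 2 * φ' z)
    ∀ z ∈ Set.Icc (-1:ℝ) 1,
      (1 + lam₁ - z) * ((G z - lam * b₀ z) * b₀ z)
          + (1 / (2 * m)) * (∫ w in (-1:ℝ)..1, φ' w * ((G w - lam * b₀ w) * b₀ w))
          + lam * b₀ z
        = G z := by
  intro b₀ lam z hz
  have hb₀meas : Measurable b₀ := by
    have : Measurable fun w : ℝ => 1 + lam₁ - w :=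
      measurable_const.sub measurable_id
    exact measurable_const.div this
  -- pointwise positivity of 1 + lam₁ - w on Icc
  have hden : ∀ w ∈ Set.Icc (-1:ℝ) 1, lam₁ ≤ 1 + lam₁ - w := fun w hw => by
    have := hw.2; linarith
  -- bound on b₀ on Icc
  have hb₀bd : ∀ w ∈ Set.Icc (-1:ℝ) 1, |b₀ w| ≤ 1 / lam₁ := by
    intro w hw
    have h1 : lam₁ ≤ 1 + lam₁ - w := hden w hw
    have h2 : (0:ℝ) < 1 + lam₁ - w := lt_of_lt_of_le hlam h1
    rw [abs_of_pos (by positivity : (0:ℝ) < b₀ w)]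
    exact one_div_le_one_div_of_le hlam h1
  -- integrability of G on Ioc
  have hGint : IntegrableOn G (Set.Icc (-1:ℝ) 1) volume := by
    have : Fact ((volume (Set.Icc (-1:ℝ) 1)) < ⊤) := ⟨by
      rw [Real.volume_Icc]; exact ENNReal.ofReal_lt_top⟩
    exact hG.integrable (by norm_num)
  have hGint' : IntegrableOn G (Set.Ioc (-1:ℝ) 1) volume :=
    hGint.mono_set Set.Ioc_subset_Icc_self
  have hCφ : 0 ≤ Cφ := (abs_nonneg _).trans (hφb 0)
  -- integrability of G * b₀ * φ' on Ioc
  have haemem : ∀ᵐ w ∂(volume.restrict (Set.Ioc (-1:ℝ) 1)), w ∈ Set.Ioc (-1:ℝ) 1 :=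
    ae_restrict_mem measurableSet_Ioc
  have hGbφ : IntegrableOn (fun w => G w * b₀ w * φ' w) (Set.Ioc (-1:ℝ) 1) volume := by
    have := hGint'.bdd_mul (c := (1/lam₁) * Cφ)
      (f := fun w => b₀ w * φ' w)
      (((hb₀meas.mul hφmeas).aestronglyMeasurable))
      (by
        filter_upwards [haemem] with w hw
        have h1 : |b₀ w| ≤ 1 / lam₁ := hb₀bd w (Set.Ioc_subset_Icc_self hw)
        have h2 : |φ' w| ≤ Cφ := hφb w
        calc ‖b₀ w * φ' w‖ = |b₀ w| * |φ' w| := by rw [norm_mul]; rfl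
          _ ≤ (1/lam₁) * Cφ := mul_le_mul h1 h2 (abs_nonneg _) (by positivity))
    exact this.congr (Filter.Eventually.of_forall fun w => by ring)
  -- integrability of b₀^2 * φ' on Ioc and Ioo
  have hb₀sqφ : ∀ s : Set ℝ, MeasurableSet s → s ⊆ Set.Icc (-1:ℝ) 1 →
      IntegrableOn (fun w => (b₀ w) ^ 2 * φ' w) s volume := by
    intro s hs hsub
    refine Integrable.mono' (g := fun _ => (1/lam₁)^2 * Cφ)
      ((integrableOn_const_iff (C := (1/lam₁)^2 * Cφ)).mpr (Or.inr ?_))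
      (((hb₀meas.pow_const 2).mul hφmeas).aestronglyMeasurable) ?_
    · exact lt_of_le_of_lt (measure_mono hsub) (by rw [Real.volume_Icc]; exact ENNReal.ofReal_lt_top)
    filter_upwards [ae_restrict_mem hs] with w hw
    have h1 : |b₀ w| ≤ 1 / lam₁ := hb₀bd w (hsub hw)
    have h2 : |φ' w| ≤ Cφ := hφb w
    calc ‖(b₀ w) ^ 2 * φ' w‖ = |b₀ w| ^ 2 * |φ' w| := by
          rw [norm_mul, Real.norm_eq_abs, Real.norm_eq_abs, abs_pow]
      _ ≤ (1/lam₁)^2 * Cφ := by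
          apply mul_le_mul _ h2 (abs_nonneg _) (by positivity)
          exact pow_le_pow_left₀ (abs_nonneg _) h1 2
  have hb₀sqIoc := hb₀sqφ _ measurableSet_Ioc Set.Ioc_subset_Icc_self
  have hb₀sqIoo := hb₀sqφ _ measurableSet_Ioo Set.Ioo_subset_Icc_self
  -- D := denominator is negative
  set D : ℝ := ∫ w in (-1:ℝ)..1, (b₀ w) ^ 2 * φ' w with hD
  have hDeqIoo : D = ∫ w in Set.Ioo (-1:ℝ) 1, (b₀ w) ^ 2 * φ' w := by
    rw [hD, intervalIntegral.integral_of_le (by norm_num : (-1:ℝ) ≤ 1),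
      ← MeasureTheory.Measure.restrict_congr_set MeasureTheory.Ioo_ae_eq_Ioc]
  have hDneg : D < 0 := by
    rw [hDeqIoo]
    have hnn : 0 ≤ᵐ[volume.restrict (Set.Ioo (-1:ℝ) 1)]
        fun w => -((b₀ w) ^ 2 * φ' w) := by
      filter_upwards [hφneg, ae_restrict_mem measurableSet_Ioo] with w hw hw'
      have h2 : (0:ℝ) < 1 + lam₁ - w := by
        have := hw'.2; linarith
      have hb : 0 < b₀ w := by positivity
      have := mul_pos (pow_pos hb 2) (neg_pos.mpr hw)
      show (0:ℝ) ≤ -(b₀ w ^ 2 * φ' w); nlinarith [this]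
    have hsupp : 0 < (volume.restrict (Set.Ioo (-1:ℝ) 1))
        (Function.support fun w => -((b₀ w) ^ 2 * φ' w)) := by
      have hsub : ∀ᵐ w ∂(volume.restrict (Set.Ioo (-1:ℝ) 1)),
          w ∈ Function.support fun w => -((b₀ w) ^ 2 * φ' w) := by
        filter_upwards [hφneg, ae_restrict_mem measurableSet_Ioo] with w hw hw'
        have h2 : (0:ℝ) < 1 + lam₁ - w := by
          have := hw'.2; linarith
        have hb : 0 < b₀ w := by positivity
        have hpos := mul_pos (pow_pos hb 2) (neg_pos.mpr hw)
        simp only [Function.mem_support]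
        intro hcontra
        nlinarith
      calc (0:ENNReal) < volume.restrict (Set.Ioo (-1:ℝ) 1) Set.univ := by
            simp [Real.volume_Ioo]
        _ = _ := MeasureTheory.measure_congr
              (Filter.EventuallyEq.symm (Filter.eventuallyEq_univ.mpr hsub))
    have hpos : 0 < ∫ w in Set.Ioo (-1:ℝ) 1, -((b₀ w) ^ 2 * φ' w) :=
      (MeasureTheory.integral_pos_iff_support_of_nonneg_ae hnn hb₀sqIoo.neg).mpr hsupp
    rw [MeasureTheory.integral_neg] at hpos
    linarith
  -- key cancellation
  set N : ℝ := ∫ w in (-1:ℝ)..1, G w * b₀ w * φ' w with hN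
  have hlamD : lam * D = N := div_mul_cancel₀ N hDneg.ne
  have hintegrand : ∀ w, φ' w * ((G w - lam * b₀ w) * b₀ w)
      = G w * b₀ w * φ' w - lam * ((b₀ w) ^ 2 * φ' w) := by
    intro w; ring
  have hII1 : IntervalIntegrable (fun w => G w * b₀ w * φ' w) volume (-1) 1 := by
    rw [intervalIntegrable_iff_integrableOn_Ioc_of_le (by norm_num : (-1:ℝ) ≤ 1)]
    exact hGbφ
  have hII2 : IntervalIntegrable (fun w => (b₀ w) ^ 2 * φ' w) volume (-1) 1 := by
    rw [intervalIntegrable_iff_integrableOn_Ioc_of_le (by norm_num : (-1:ℝ) ≤ 1)]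
    exact hb₀sqIoc
  have hmid : (∫ w in (-1:ℝ)..1, φ' w * ((G w - lam * b₀ w) * b₀ w)) = 0 := by
    have : (∫ w in (-1:ℝ)..1, φ' w * ((G w - lam * b₀ w) * b₀ w))
        = ∫ w in (-1:ℝ)..1, (G w * b₀ w * φ' w - lam * ((b₀ w) ^ 2 * φ' w)) := by
      apply intervalIntegral.integral_congr
      intro w _; exact hintegrand w
    rw [this, intervalIntegral.integral_sub hII1 (hII2.const_mul lam),
      intervalIntegral.integral_const_mul, ← hN, ← hD, hlamD, sub_self]
  -- finish pointwise
  have hzne : (1 + lam₁ - z) ≠ 0 := by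
    have := hden z hz; linarith
  have hb₀z : (1 + lam₁ - z) * b₀ z = 1 := by
    show (1 + lam₁ - z) * (1 / (1 + lam₁ - z)) = 1
    field_simp
  rw [hmid]
  have : (1 + lam₁ - z) * ((G z - lam * b₀ z) * b₀ z)
      = (G z - lam * b₀ z) * ((1 + lam₁ - z) * b₀ z) := by ring
  rw [this, hb₀z]
  ring
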